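/- (High-power regime, Rayleigh, ZF: constant gain log₂ κ.) With equal pilot and data power p^d_k = p^p_k = p for all users, define for each p > 0 the Rayleigh ZF SINRs SINR^ZF(p) = (M−K) p β_k μ_k(p) / ( Σ_{k'} p β_{k'}(1 − μ_{k'}(p)) + σ²/(ρ|Φ|²) ) with μ_k(p) = ρ τ p β_k |Φ|²/(ρ τ p β_k |Φ|² + σ²) for the atomic receiver, and SINR_RF^ZF(p) defined analogously with (ρ_RF, 1, σ_RF²) in place of (ρ, |Φ|², σ²). Then the achievable-rate difference ΔR(p) = ((T−τ)/T)[ log₂(1 + SINR^ZF(p)) − log₂(1 + SINR_RF^ZF(p)) ] satisfies lim_{p → ∞} ΔR(p) = ((T−τ)/T) log₂ κ, where κ = (ρ|Φ|²/σ²)/(ρ_RF/σ_RF²). -/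

import Mathlib

open Finset Filter

lemma aux_ratio (a b c : ℝ) (ha : 0 < a) :
    Tendsto (fun p => c * p / (a * p + b)) atTop (nhds (c / a)) := by
  have h0 : Tendsto (fun p : ℝ => b / p) atTop (nhds 0) :=
    Tendsto.div_atTop tendsto_const_nhds tendsto_id
  have h1 : Tendsto (fun p : ℝ => a + b / p) atTop (nhds a) := by
    simpa using tendsto_const_nhds.add h0
  have h2 : Tendsto (fun p : ℝ => c / (a + b / p)) atTop (nhds (c / a)) :=
    tendsto_const_nhds.div h1 ha.ne'
  refine h2.congr' ?_
  filter_upwards [eventually_gt_atTop (|b| / a), eventually_gt_atTop 0] with p hp hp0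
  have hb : |b| < a * p := by
    have := (div_lt_iff₀ ha).mp hp
    linarith [this]
  have hden : 0 < a * p + b := by
    have := neg_abs_le b
    linarith
  have h3 : a + b / p = (a * p + b) / p := by field_simp
  rw [h3, div_div_eq_mul_div]

set_option maxHeartbeats 1000000 in
/-- High-power regime, Rayleigh fading, ZF: the achievable-rate
difference between the atomic and RF receivers tends to `((T−τ)/T) log₂ κ`, where
`κ = (ρ|Φ|²/σ²)/(ρ_RF/σ_RF²)`. -/
theorem stmt_11
    (K M : ℕ) (hK : 1 ≤ K) (hMK : K < M)
    (β : Fin K → ℝ) (ρ Φ2 σ2 ρRF σRF2 τ T κ : ℝ)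
    (hβ : ∀ k, 0 < β k) (hρ : 0 < ρ) (hΦ2 : 0 < Φ2) (hσ2 : 0 < σ2)
    (hρRF : 0 < ρRF) (hσRF2 : 0 < σRF2) (hτ : 0 < τ) (hT : τ < T)
    (hκ : κ = (ρ * Φ2 / σ2) / (ρRF / σRF2))
    (μ μRF : ℝ → Fin K → ℝ)
    (hμ : ∀ p k, μ p k = ρ * τ * p * β k * Φ2 / (ρ * τ * p * β k * Φ2 + σ2))
    (hμRF : ∀ p k, μRF p k = ρRF * τ * p * β k / (ρRF * τ * p * β k + σRF2))
    (S SRF ΔR : ℝ → ℝ) (k : Fin K)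
    (hS : ∀ p, S p = ((M : ℝ) - K) * p * β k * μ p k /
        ((∑ k', p * β k' * (1 - μ p k')) + σ2 / (ρ * Φ2)))
    (hSRF : ∀ p, SRF p = ((M : ℝ) - K) * p * β k * μRF p k /
        ((∑ k', p * β k' * (1 - μRF p k')) + σRF2 / ρRF))
    (hΔR : ∀ p, ΔR p = ((T - τ) / T) * (Real.logb 2 (1 + S p) - Real.logb 2 (1 + SRF p))) :
    Tendsto ΔR atTop (nhds (((T - τ) / T) * Real.logb 2 κ)) := by
  have hMK' : (0:ℝ) < (M:ℝ) - K := by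
    have : (K:ℝ) < M := by exact_mod_cast hMK
    linarith
  have hK0 : (0:ℝ) ≤ (K:ℝ) := Nat.cast_nonneg K
  set a : Fin K → ℝ := fun k' => ρ * τ * β k' * Φ2 with ha_def
  have ha : ∀ k', 0 < a k' := fun k' =>
    mul_pos (mul_pos (mul_pos hρ hτ) (hβ k')) hΦ2
  set aR : Fin K → ℝ := fun k' => ρRF * τ * β k' with haR_def
  have haR : ∀ k', 0 < aR k' := fun k' => mul_pos (mul_pos hρRF hτ) (hβ k')
  -- limits of μ
  have hμlim : ∀ k', Tendsto (fun p => μ p k') atTop (nhds 1) := by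
    intro k'
    have h := aux_ratio (a k') σ2 (a k') (ha k')
    rw [div_self (ha k').ne'] at h
    refine h.congr fun p => ?_
    rw [hμ]; simp only [ha_def]; ring_nf
  have hμRFlim : ∀ k', Tendsto (fun p => μRF p k') atTop (nhds 1) := by
    intro k'
    have h := aux_ratio (aR k') σRF2 (aR k') (haR k')
    rw [div_self (haR k').ne'] at h
    refine h.congr fun p => ?_
    rw [hμRF]; simp only [haR_def]; ring_nf
  -- limits of the interference terms
  have hterm : ∀ k', Tendsto (fun p => p * β k' * (1 - μ p k')) atTop
      (nhds (σ2 / (ρ * τ * Φ2))) := by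
    intro k'
    have h := aux_ratio (a k') σ2 (β k' * σ2) (ha k')
    have hv : β k' * σ2 / a k' = σ2 / (ρ * τ * Φ2) := by
      have hb := hβ k'
      simp only [ha_def]
      rw [div_eq_div_iff (by positivity) (by positivity)]
      ring
    rw [hv] at h
    refine h.congr' ?_
    filter_upwards [eventually_gt_atTop 0] with p hp0
    have hden : 0 < a k' * p + σ2 := by have := ha k'; positivity
    rw [hμ]
    have he : ρ * τ * p * β k' * Φ2 = a k' * p := by simp only [ha_def]; ring
    rw [he]
    rw [one_sub_div hden.ne']
    field_simp
    ring
  have htermRF : ∀ k', Tendsto (fun p => p * β k' * (1 - μRF p k')) atTop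
      (nhds (σRF2 / (ρRF * τ))) := by
    intro k'
    have h := aux_ratio (aR k') σRF2 (β k' * σRF2) (haR k')
    have hv : β k' * σRF2 / aR k' = σRF2 / (ρRF * τ) := by
      have hb := hβ k'
      simp only [haR_def]
      rw [div_eq_div_iff (by positivity) (by positivity)]
      ring
    rw [hv] at h
    refine h.congr' ?_
    filter_upwards [eventually_gt_atTop 0] with p hp0
    have hden : 0 < aR k' * p + σRF2 := by have := haR k'; positivity
    rw [hμRF]
    have he : ρRF * τ * p * β k' = aR k' * p := by simp only [haR_def]; ring
    rw [he]
    rw [one_sub_div hden.ne']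
    field_simp
    ring
  -- denominator limits
  set Dat : ℝ := (K:ℝ) * (σ2 / (ρ * τ * Φ2)) + σ2 / (ρ * Φ2) with hDat_def
  set DRF : ℝ := (K:ℝ) * (σRF2 / (ρRF * τ)) + σRF2 / ρRF with hDRF_def
  have hDatpos : 0 < Dat := by
    have h1 : 0 < σ2 / (ρ * Φ2) := by positivity
    have h2 : 0 ≤ (K:ℝ) * (σ2 / (ρ * τ * Φ2)) := by positivity
    simp only [hDat_def]; linarith
  have hDRFpos : 0 < DRF := by
    have h1 : 0 < σRF2 / ρRF := by positivity
    have h2 : 0 ≤ (K:ℝ) * (σRF2 / (ρRF * τ)) := by positivity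
    simp only [hDRF_def]; linarith
  have hden : Tendsto (fun p => (∑ k', p * β k' * (1 - μ p k')) + σ2 / (ρ * Φ2))
      atTop (nhds Dat) := by
    have hsum : Tendsto (fun p => ∑ k', p * β k' * (1 - μ p k')) atTop
        (nhds ((K:ℝ) * (σ2 / (ρ * τ * Φ2)))) := by
      have := tendsto_finset_sum (univ : Finset (Fin K)) (fun k' _ => hterm k')
      simpa [Finset.sum_const, card_univ, nsmul_eq_mul] using this
    exact hsum.add tendsto_const_nhds
  have hdenRF : Tendsto (fun p => (∑ k', p * β k' * (1 - μRF p k')) + σRF2 / ρRF)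
      atTop (nhds DRF) := by
    have hsum : Tendsto (fun p => ∑ k', p * β k' * (1 - μRF p k')) atTop
        (nhds ((K:ℝ) * (σRF2 / (ρRF * τ)))) := by
      have := tendsto_finset_sum (univ : Finset (Fin K)) (fun k' _ => htermRF k')
      simpa [Finset.sum_const, card_univ, nsmul_eq_mul] using this
    exact hsum.add tendsto_const_nhds
  -- S p / p
  set g : ℝ → ℝ := fun p => ((M:ℝ) - K) * β k * μ p k /
      ((∑ k', p * β k' * (1 - μ p k')) + σ2 / (ρ * Φ2)) with hg_def
  set gR : ℝ → ℝ := fun p => ((M:ℝ) - K) * β k * μRF p k /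
      ((∑ k', p * β k' * (1 - μRF p k')) + σRF2 / ρRF) with hgR_def
  set Cat : ℝ := ((M:ℝ) - K) * β k / Dat with hCat_def
  set CRF : ℝ := ((M:ℝ) - K) * β k / DRF with hCRF_def
  have hCatpos : 0 < Cat := div_pos (mul_pos hMK' (hβ k)) hDatpos
  have hCRFpos : 0 < CRF := div_pos (mul_pos hMK' (hβ k)) hDRFpos
  have hg : Tendsto g atTop (nhds Cat) := by
    have hnum : Tendsto (fun p => ((M:ℝ) - K) * β k * μ p k) atTop
        (nhds (((M:ℝ) - K) * β k)) := by
      simpa using (tendsto_const_nhds (x := ((M:ℝ) - K) * β k)).mul (hμlim k)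
    exact hnum.div hden hDatpos.ne'
  have hgR : Tendsto gR atTop (nhds CRF) := by
    have hnum : Tendsto (fun p => ((M:ℝ) - K) * β k * μRF p k) atTop
        (nhds (((M:ℝ) - K) * β k)) := by
      simpa using (tendsto_const_nhds (x := ((M:ℝ) - K) * β k)).mul (hμRFlim k)
    exact hnum.div hdenRF hDRFpos.ne'
  have hSg : ∀ p, S p = p * g p := by
    intro p; rw [hS]; simp only [hg_def]; ring
  have hSgR : ∀ p, SRF p = p * gR p := by
    intro p; rw [hSRF]; simp only [hgR_def]; ring
  -- ratio limit
  have hκpos : 0 < κ := by rw [hκ]; positivity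
  have hxne : ((M:ℝ) - K) * β k ≠ 0 := (mul_pos hMK' (hβ k)).ne'
  have hq : (0:ℝ) < (K:ℝ) / τ + 1 := by positivity
  have e1 : Dat = σ2 / (ρ * Φ2) * ((K:ℝ) / τ + 1) := by
    simp only [hDat_def]
    field_simp
  have e2 : DRF = σRF2 / ρRF * ((K:ℝ) / τ + 1) := by
    simp only [hDRF_def]
    field_simp
  have hDD : DRF / Dat = κ := by
    rw [e1, e2, mul_div_mul_right _ _ hq.ne', hκ,
      div_eq_div_iff (by positivity) (by positivity)]
    field_simp
  have hCatCRF : Cat / CRF = κ := by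
    rw [hCat_def, hCRF_def, div_div_div_comm, div_self hxne, one_div, inv_div, hDD]
  have hratio : Tendsto (fun p => (1 + S p) / (1 + SRF p)) atTop (nhds κ) := by
    have h0 : Tendsto (fun p : ℝ => 1 / p) atTop (nhds 0) := by
      simpa using tendsto_inv_atTop_zero
    have h4 : Tendsto (fun p => (1 / p + g p) / (1 / p + gR p)) atTop
        (nhds ((0 + Cat) / (0 + CRF))) := by
      refine (h0.add hg).div (h0.add hgR) ?_
      simpa using hCRFpos.ne'
    rw [zero_add, zero_add, hCatCRF] at h4
    refine h4.congr' ?_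
    filter_upwards [eventually_gt_atTop 0, hg.eventually (eventually_gt_nhds hCatpos),
      hgR.eventually (eventually_gt_nhds hCRFpos)] with p hp0 hgp hgRp
    rw [hSg, hSgR, div_eq_div_iff (by positivity) (by positivity)]
    field_simp
  -- positivity of 1 + S p and 1 + SRF p eventually
  have hSpos : ∀ᶠ p in atTop, 0 < 1 + S p := by
    filter_upwards [eventually_gt_atTop 0, hg.eventually (eventually_gt_nhds hCatpos)]
      with p hp0 hgp
    rw [hSg]; nlinarith
  have hSRFpos : ∀ᶠ p in atTop, 0 < 1 + SRF p := by
    filter_upwards [eventually_gt_atTop 0, hgR.eventually (eventually_gt_nhds hCRFpos)]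
      with p hp0 hgp
    rw [hSgR]; nlinarith
  have hlog : Tendsto (fun p => Real.logb 2 ((1 + S p) / (1 + SRF p))) atTop
      (nhds (Real.logb 2 κ)) := by
    simp only [Real.logb]
    exact ((Real.continuousAt_log hκpos.ne').tendsto.comp hratio).div_const _
  refine (hlog.const_mul ((T - τ) / T)).congr' ?_
  filter_upwards [hSpos, hSRFpos] with p h1 h2
  rw [hΔR, Real.logb_div h1.ne' h2.ne']
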